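/- arXiv:2102.07374 — 3 statements merged into one kernel-verified Lean document; each statement's English description precedes it below -/
import Mathlib

section
/- The concatenation axiom for complement is sound: for match expressions e of width n₁ and e' of width n₂, the interpretation of the complement of e e' equals the interpretation of (ē ⊤_{n₂}) + (⊤_{n₁} ē'), i.e. 2^{n₁+n₂} − ⟦e e'⟧ = (⟦ē⟧ · 2^{n₂}) ∪ (2^{n₁} · ⟦ē'⟧), where · denotes elementwise string concatenation of sets. -/
/-- Match expressions, indexed by their width. -/
inductive MExp : ℕ → Type
  | eps : MExp 0
  | bot {n : ℕ} : MExp n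
  | b0 : MExp 1
  | b1 : MExp 1
  | wx : MExp 1
  | cat {m k : ℕ} : MExp m → MExp k → MExp (m + k)
  | plus {n : ℕ} : MExp n → MExp n → MExp n
  | inter {n : ℕ} : MExp n → MExp n → MExp n
  | compl {n : ℕ} : MExp n → MExp n

/-- Interpretation of a match expression of width `n` as a set of
binary strings of length `n` (represented as lists of booleans). -/
def msem : {n : ℕ} → MExp n → Set (List Bool)
  | _, .eps => {[]}
  | _, .bot => ∅
  | _, .b0 => {[false]}
  | _, .b1 => {[true]}
  | _, .wx => {[false], [true]}
  | _, .cat e e' => {s | ∃ x ∈ msem e, ∃ y ∈ msem e', s = x ++ y}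
  | _, .plus e e' => msem e ∪ msem e'
  | _, .inter e e' => msem e ∩ msem e'
  | n, .compl e => {s : List Bool | s.length = n} \ msem e

/-- `⊤ₙ`: the concatenation of `n` wildcards (`⊤₀ = •`). -/
def mtop : (n : ℕ) → MExp n
  | 0 => .eps
  | n + 1 => .cat (mtop n) .wx
lemma msem_length : ∀ {n : ℕ} (e : MExp n) (s : List Bool), s ∈ msem e → s.length = n := by
  intro n e
  induction e with
  | eps => intro s hs; simp [msem] at hs; simp [hs]
  | bot => intro s hs; simp [msem] at hs
  | b0 => intro s hs; simp [msem] at hs; simp [hs]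
  | b1 => intro s hs; simp [msem] at hs; simp [hs]
  | wx => intro s hs; rcases hs with h | h <;> simp_all
  | cat e e' ih ih' =>
      rintro s ⟨x, hx, y, hy, rfl⟩
      simp [ih x hx, ih' y hy]
  | plus e e' ih ih' => rintro s (h | h); exacts [ih s h, ih' s h]
  | inter e e' ih ih' => rintro s ⟨h, _⟩; exact ih s h
  | compl e ih => rintro s ⟨h, _⟩; exact h

lemma mtop_sem (n : ℕ) : msem (mtop n) = {s : List Bool | s.length = n} := by
  induction n with
  | zero => ext s; simp [mtop, msem, List.length_eq_zero_iff]
  | succ n ih =>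
      ext s
      simp only [mtop, msem, ih, Set.mem_setOf_eq]
      constructor
      · rintro ⟨x, hx, y, hy, rfl⟩
        rcases hy with h | h <;> simp_all
      · intro hs
        refine ⟨s.take n, ?_, [s.get ⟨n, by omega⟩], ?_, ?_⟩
        · simp [hs]
        · cases s.get ⟨n, by omega⟩ <;> simp [msem]
        · have h := List.take_concat_get (show n < s.length by omega)
          simp only [List.concat_eq_append] at h
          simp only [List.get_eq_getElem]
          rw [h, List.take_of_length_le (by omega)]

/-- Soundness of the complement-of-concatenation axiom:
`⟦(e e')̄⟧ = ⟦ē ⊤_{n₂} + ⊤_{n₁} ē'⟧`. -/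
theorem compl_cat_sound {n₁ n₂ : ℕ} (e : MExp n₁) (e' : MExp n₂) :
    msem (.compl (.cat e e')) =
      msem (.plus (.cat (.compl e) (mtop n₂)) (.cat (mtop n₁) (.compl e'))) := by
  ext s
  simp only [msem, mtop_sem, Set.mem_diff, Set.mem_setOf_eq, Set.mem_union]
  constructor
  · rintro ⟨hlen, hns⟩
    by_cases hx : s.take n₁ ∈ msem e
    · right
      refine ⟨s.take n₁, by simp [hlen], s.drop n₁, ⟨by simp [hlen], ?_⟩, by simp⟩
      intro hy
      exact hns ⟨s.take n₁, hx, s.drop n₁, hy, by simp⟩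
    · left
      exact ⟨s.take n₁, ⟨by simp [hlen], hx⟩, s.drop n₁, by simp [hlen], by simp⟩
  · rintro (⟨x, ⟨hxl, hxn⟩, y, hyl, rfl⟩ | ⟨x, hxl, y, ⟨hyl, hyn⟩, rfl⟩)
    · refine ⟨by simp [hxl, hyl], ?_⟩
      rintro ⟨x', hx', y', hy', heq⟩
      have hxl' := msem_length e x' hx'
      have : x' = x := by
        have := congrArg (List.take n₁) heq
        simpa [hxl, hxl'] using this.symm
      exact hxn (this ▸ hx')
    · refine ⟨by simp [hxl, hyl], ?_⟩
      rintro ⟨x', hx', y', hy', heq⟩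
      have hxl' := msem_length e x' hx'
      have : y' = y := by
        have := congrArg (List.drop n₁) heq
        simpa [hxl, hxl'] using this.symm
      exact hyn (this ▸ hy')
end

section
/- If two dup-free NetKAT terms agree on heads of outputs on all inputs — i.e. hd[⟦e⟧(h)] = hd[⟦e'⟧(h)] for all packet histories h — then ⟦e⟧ = ⟦e'⟧. -/
/-- Packets: binary strings of length `n`. -/
abbrev Pk (n : ℕ) := List.Vector Bool n

/-- The `p`-th bit of a packet. -/
def getBit {n : ℕ} (π : Pk n) (p : ℕ) : Bool := π.toList.getD p false

/-- The packet `π[p ← k]`. -/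
def setBit {n : ℕ} (π : Pk n) (p : ℕ) (k : Bool) : Pk n :=
  ⟨π.1.set p k, by rw [List.length_set]; exact π.2⟩
/-- NetKAT terms over `n` one-bit fields `f₀,…,f_{n-1}`. -/
inductive NK : Type
  | zero : NK
  | one : NK
  | dup : NK
  | test (p : ℕ) (k : Bool) : NK
  | assign (p : ℕ) (k : Bool) : NK
  | plus (a b : NK) : NK
  | seq (a b : NK) : NK
  | star (a : NK) : NK
  | compl (a : NK) : NK

/-- Packet histories: a head packet together with the (possibly empty) rest. -/
abbrev Hist (n : ℕ) := Pk n × List (Pk n)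

/-- `m`-fold Kleisli iteration of `f` in the powerset monad. -/
def kpow {α : Type*} (f : α → Set α) : ℕ → α → Set α
  | 0, h => {h}
  | m + 1, h => ⋃ h' ∈ f h, kpow f m h'

/-- NetKAT packet-history semantics. -/
def nksem {n : ℕ} : NK → Hist n → Set (Hist n)
  | .zero, _ => ∅
  | .one, h => {h}
  | .dup, h => {(h.1, h.1 :: h.2)}
  | .test p k, h => if getBit h.1 p = k then {h} else ∅
  | .assign p k, h => {(setBit h.1 p k, h.2)}
  | .plus a b, h => nksem a h ∪ nksem b h
  | .seq a b, h => ⋃ h' ∈ nksem a h, nksem b h'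
  | .star a, h => ⋃ m : ℕ, kpow (nksem a) m h
  | .compl a, h => {h} \ nksem a h

/-- A NetKAT term is `dup`-free if it contains no occurrence of `dup`. -/
def dupFree : NK → Prop
  | .dup => False
  | .plus a b => dupFree a ∧ dupFree b
  | .seq a b => dupFree a ∧ dupFree b
  | .star a => dupFree a
  | .compl a => dupFree a
  | _ => True

/-- Dup-free terms never modify the tail of the history. -/
lemma dupFree_tail {n : ℕ} (e : NK) (he : dupFree e) :
    ∀ h h' : Hist n, h' ∈ nksem e h → h'.2 = h.2 := by
  induction e with
  | zero => intro h h' hm; exact absurd hm (Set.notMem_empty _)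
  | one => intro h h' hm; rw [nksem] at hm; simp at hm; rw [hm]
  | dup => exact absurd he id
  | test p k =>
    intro h h' hm; rw [nksem] at hm
    split at hm
    · simp at hm; rw [hm]
    · exact absurd hm (Set.notMem_empty _)
  | assign p k => intro h h' hm; rw [nksem] at hm; simp at hm; rw [hm]
  | plus a b iha ihb =>
    intro h h' hm
    rcases hm with hm | hm
    · exact iha he.1 h h' hm
    · exact ihb he.2 h h' hm
  | seq a b iha ihb =>
    intro h h' hm
    rw [nksem] at hm
    simp only [Set.mem_iUnion] at hm
    obtain ⟨h'', hm1, hm2⟩ := hm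
    rw [ihb he.2 h'' h' hm2, iha he.1 h h'' hm1]
  | star a iha =>
    intro h h' hm
    rw [nksem] at hm
    simp only [Set.mem_iUnion] at hm
    obtain ⟨m, hm⟩ := hm
    induction m generalizing h with
    | zero => simp [kpow] at hm; rw [hm]
    | succ m ih =>
      simp only [kpow, Set.mem_iUnion] at hm
      obtain ⟨h'', hm1, hm2⟩ := hm
      rw [ih h'' hm2, iha he h h'' hm1]
  | compl a iha =>
    intro h h' hm
    rw [nksem] at hm
    have := hm.1
    simp at this; rw [this]

/-- If two `dup`-free NetKAT terms agree on the heads of their outputs on all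
input histories, then their full history semantics coincide. -/
theorem dupFree_head_determined {n : ℕ} (e e' : NK)
    (he : dupFree e) (he' : dupFree e')
    (hagree : ∀ h : Hist n, Prod.fst '' nksem e h = Prod.fst '' nksem e' h) :
    ∀ h : Hist n, nksem e h = nksem (n := n) e' h := by
  intro h
  have key : ∀ (f : NK), dupFree f → ∀ x : Hist n,
      x ∈ nksem f h ↔ (x.2 = h.2 ∧ x.1 ∈ Prod.fst '' nksem f h) := by
    intro f hf x
    constructor
    · intro hx
      exact ⟨dupFree_tail f hf h x hx, ⟨x, hx, rfl⟩⟩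
    · rintro ⟨ht, ⟨y, hy, hxy⟩⟩
      have : y = x := by
        have hyt := dupFree_tail f hf h y hy
        exact Prod.ext hxy (hyt.trans ht.symm)
      rwa [← this]
  ext x
  rw [key e he x, key e' he' x, hagree h]
end

section
/- Every match expression of width n is provably equal, using the match expression axioms and Boolean algebra axioms, to a sum (possibly empty, i.e. ⊥) of purely concatenative expressions over atoms {0,1}: e ≡ Σ_{b ∈ ⟦e⟧} ĉ(b), where ĉ(b) is the concatenation of the literal bits of b. Consequently, semantic equality implies provable equality (completeness of the match expression axioms). -/
/-- Cast a match expression along an equality of widths. -/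
def MExp.cast {m n : ℕ} (h : m = n) (e : MExp m) : MExp n := h ▸ e

/-- Provable equality of match expressions: Boolean algebra axioms at each
width, together with the match expression axioms of Figure 2. -/
inductive MEq : {n : ℕ} → MExp n → MExp n → Prop
  -- equivalence
  | refl {n} (e : MExp n) : MEq e e
  | symm {n} {e f : MExp n} : MEq e f → MEq f e
  | trans {n} {e f g : MExp n} : MEq e f → MEq f g → MEq e g
  -- congruence
  | plusCongr {n} {e e' f f' : MExp n} : MEq e e' → MEq f f' → MEq (.plus e f) (.plus e' f')
  | interCongr {n} {e e' f f' : MExp n} : MEq e e' → MEq f f' → MEq (.inter e f) (.inter e' f')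
  | complCongr {n} {e e' : MExp n} : MEq e e' → MEq (.compl e) (.compl e')
  | catCongr {m k} {e e' : MExp m} {f f' : MExp k} :
      MEq e e' → MEq f f' → MEq (.cat e f) (.cat e' f')
  -- Boolean algebra axioms
  | plusComm {n} (e f : MExp n) : MEq (.plus e f) (.plus f e)
  | plusAssoc {n} (e f g : MExp n) : MEq (.plus (.plus e f) g) (.plus e (.plus f g))
  | interComm {n} (e f : MExp n) : MEq (.inter e f) (.inter f e)
  | interAssoc {n} (e f g : MExp n) : MEq (.inter (.inter e f) g) (.inter e (.inter f g))
  | plusBot {n} (e : MExp n) : MEq (.plus e .bot) e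
  | interTop {n} (e : MExp n) : MEq (.inter e (mtop n)) e
  | plusDistrib {n} (e f g : MExp n) :
      MEq (.plus e (.inter f g)) (.inter (.plus e f) (.plus e g))
  | interDistrib {n} (e f g : MExp n) :
      MEq (.inter e (.plus f g)) (.plus (.inter e f) (.inter e g))
  | complPlus {n} (e : MExp n) : MEq (.plus e (.compl e)) (mtop n)
  | complInter {n} (e : MExp n) : MEq (.inter e (.compl e)) .bot
  -- match expression axioms
  | zeroCompl : MEq (.compl .b0) .b1
  | onePlusZero : MEq (.plus .b1 .b0) .wx
  | zeroPlusOne : MEq (.plus .b0 .b1) .wx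
  | oneInterZero : MEq (.inter .b1 .b0) .bot
  | zeroInterOne : MEq (.inter .b0 .b1) .bot
  | epsCatL {n} (e : MExp n) : MEq (MExp.cast (Nat.zero_add n) (.cat .eps e)) e
  | epsCatR {n} (e : MExp n) : MEq (.cat e .eps) e
  | botCatL {m k} (e : MExp k) : MEq (.cat (.bot : MExp m) e) .bot
  | botCatR {m k} (e : MExp m) : MEq (.cat e (.bot : MExp k)) .bot
  | complCat {m k} (e : MExp m) (f : MExp k) :
      MEq (.compl (.cat e f)) (.plus (.cat (.compl e) (mtop k)) (.cat (mtop m) (.compl f)))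
  | catAssoc {a b c} (e : MExp a) (f : MExp b) (g : MExp c) :
      MEq (MExp.cast (Nat.add_assoc a b c) (.cat (.cat e f) g)) (.cat e (.cat f g))
  | catPlusL {m k} (e : MExp m) (f g : MExp k) :
      MEq (.cat e (.plus f g)) (.plus (.cat e f) (.cat e g))
  | catPlusR {m k} (e f : MExp m) (g : MExp k) :
      MEq (.cat (.plus e f) g) (.plus (.cat e g) (.cat f g))
  | catInterL {m k} (e : MExp m) (f g : MExp k) :
      MEq (.cat e (.inter f g)) (.inter (.cat e f) (.cat e g))
  | catInterR {m k} (e f : MExp m) (g : MExp k) :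
      MEq (.cat (.inter e f) g) (.inter (.cat e g) (.cat f g))

/-- The width-1 expression matching exactly the bit `c`. -/
def bitAtom : Bool → MExp 1
  | false => .b0
  | true => .b1

/-- `ĉ(b)`: the purely concatenative expression made of the literal bits of `b`. -/
def ofString : (b : List Bool) → MExp b.length
  | [] => .eps
  | c :: t => MExp.cast (Nat.add_comm 1 t.length) (.cat (bitAtom c) (ofString t))

/-- `ĉ(b)` coerced to width `n` (it is `⊥` if `b` does not have length `n`,
which never occurs below). -/
def ofStringN (n : ℕ) (b : List Bool) : MExp n :=
  if h : b.length = n then MExp.cast h (ofString b) else .bot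

/-- All binary strings of length `n`. -/
def allStrings : ℕ → List (List Bool)
  | 0 => [[]]
  | n + 1 => (allStrings n).map (false :: ·) ++ (allStrings n).map (true :: ·)

open Classical in
/-- `Σ_{b ∈ ⟦e⟧} ĉ(b)`: the sum (possibly empty, i.e. `⊥`) of the purely
concatenative expressions of the strings matched by `e`. -/
noncomputable def normalForm {n : ℕ} (e : MExp n) : MExp n :=
  ((allStrings n).filter fun b => decide (b ∈ msem e)).foldr
    (fun b acc => .plus (ofStringN n b) acc) .bot

namespace Completeness

instance mSetoid (n : ℕ) : Setoid (MExp n) := ⟨MEq, ⟨MEq.refl, MEq.symm, MEq.trans⟩⟩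

abbrev Q (n : ℕ) := Quotient (mSetoid n)

noncomputable instance (priority := 2000) decAll (p : Prop) : Decidable p :=
  Classical.propDecidable p

def mk {n : ℕ} (e : MExp n) : Q n := Quotient.mk _ e

lemma mk_eq {n} {e f : MExp n} : mk e = mk f ↔ MEq e f := ⟨fun h => Quotient.exact h, fun h => Quotient.sound h⟩

instance (n : ℕ) : Max (Q n) :=
  ⟨Quotient.map₂ .plus fun _ _ h _ _ h' => MEq.plusCongr h h'⟩
instance (n : ℕ) : Min (Q n) :=
  ⟨Quotient.map₂ .inter fun _ _ h _ _ h' => MEq.interCongr h h'⟩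
instance (n : ℕ) : Compl (Q n) :=
  ⟨Quotient.map .compl fun _ _ h => MEq.complCongr h⟩
instance (n : ℕ) : Bot (Q n) := ⟨mk .bot⟩
instance (n : ℕ) : Top (Q n) := ⟨mk (mtop n)⟩

def qcat {m k : ℕ} : Q m → Q k → Q (m + k) :=
  Quotient.map₂ .cat fun _ _ h _ _ h' => MEq.catCongr h h'

@[simp] lemma mk_plus {n} (e f : MExp n) : mk (.plus e f) = mk e ⊔ mk f := rfl
@[simp] lemma mk_inter {n} (e f : MExp n) : mk (.inter e f) = mk e ⊓ mk f := rfl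
@[simp] lemma mk_compl {n} (e : MExp n) : mk (.compl e) = (mk e)ᶜ := rfl
@[simp] lemma mk_cat {m k} (e : MExp m) (f : MExp k) : mk (.cat e f) = qcat (mk e) (mk f) := rfl
@[simp] lemma mk_bot {n} : mk (.bot : MExp n) = ⊥ := rfl
@[simp] lemma mk_top {n} : mk (mtop n) = ⊤ := rfl

def qcast {m n : ℕ} (h : m = n) (x : Q m) : Q n := h ▸ x

@[simp] lemma qcast_rfl {n} (x : Q n) : qcast rfl x = x := rfl
@[simp] lemma mk_cast {m n} (h : m = n) (e : MExp m) :
    mk (MExp.cast h e) = qcast h (mk e) := by subst h; rfl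
lemma qcast_qcast {m n p} (h : m = n) (h' : n = p) (x : Q m) :
    qcast h' (qcast h x) = qcast (h.trans h') x := by subst h; subst h'; rfl
lemma qcast_eq_iff {m n} (h : m = n) (x : Q m) (y : Q n) :
    qcast h x = y ↔ x = qcast h.symm y := by subst h; rfl
@[simp] lemma qcast_inj {m n} (h : m = n) (x y : Q m) :
    qcast h x = qcast h y ↔ x = y := by subst h; rfl
@[simp] lemma qcast_sup {m n} (h : m = n) (x y : Q m) :
    qcast h (x ⊔ y) = qcast h x ⊔ qcast h y := by subst h; rfl
@[simp] lemma qcast_inf {m n} (h : m = n) (x y : Q m) :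
    qcast h (x ⊓ y) = qcast h x ⊓ qcast h y := by subst h; rfl
@[simp] lemma qcast_bot {m n} (h : m = n) : qcast h (⊥ : Q m) = ⊥ := by subst h; rfl
@[simp] lemma qcast_compl {m n} (h : m = n) (x : Q m) :
    qcast h xᶜ = (qcast h x)ᶜ := by subst h; rfl

-- lifted axioms
lemma qsup_comm {n} (a b : Q n) : a ⊔ b = b ⊔ a :=
  Quotient.inductionOn₂ a b fun e f => Quotient.sound (MEq.plusComm e f)
lemma qsup_assoc {n} (a b c : Q n) : a ⊔ b ⊔ c = a ⊔ (b ⊔ c) :=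
  Quotient.inductionOn₃ a b c fun e f g => Quotient.sound (MEq.plusAssoc e f g)
lemma qinf_comm {n} (a b : Q n) : a ⊓ b = b ⊓ a :=
  Quotient.inductionOn₂ a b fun e f => Quotient.sound (MEq.interComm e f)
lemma qinf_assoc {n} (a b c : Q n) : a ⊓ b ⊓ c = a ⊓ (b ⊓ c) :=
  Quotient.inductionOn₃ a b c fun e f g => Quotient.sound (MEq.interAssoc e f g)
lemma qsup_bot {n} (a : Q n) : a ⊔ ⊥ = a :=
  Quotient.inductionOn a fun e => Quotient.sound (MEq.plusBot e)
lemma qinf_top {n} (a : Q n) : a ⊓ ⊤ = a :=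
  Quotient.inductionOn a fun e => Quotient.sound (MEq.interTop e)
lemma qsup_distrib {n} (a b c : Q n) : a ⊔ b ⊓ c = (a ⊔ b) ⊓ (a ⊔ c) :=
  Quotient.inductionOn₃ a b c fun e f g => Quotient.sound (MEq.plusDistrib e f g)
lemma qinf_distrib {n} (a b c : Q n) : a ⊓ (b ⊔ c) = a ⊓ b ⊔ a ⊓ c :=
  Quotient.inductionOn₃ a b c fun e f g => Quotient.sound (MEq.interDistrib e f g)
lemma qsup_compl {n} (a : Q n) : a ⊔ aᶜ = ⊤ :=
  Quotient.inductionOn a fun e => Quotient.sound (MEq.complPlus e)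
lemma qinf_compl {n} (a : Q n) : a ⊓ aᶜ = ⊥ :=
  Quotient.inductionOn a fun e => Quotient.sound (MEq.complInter e)

-- derived facts
lemma qsup_top {n} (a : Q n) : a ⊔ ⊤ = ⊤ := by
  calc a ⊔ ⊤ = (a ⊔ ⊤) ⊓ ⊤ := (qinf_top _).symm
    _ = (a ⊔ ⊤) ⊓ (a ⊔ aᶜ) := by rw [qsup_compl]
    _ = a ⊔ ⊤ ⊓ aᶜ := (qsup_distrib _ _ _).symm
    _ = a ⊔ aᶜ ⊓ ⊤ := by rw [qinf_comm]
    _ = a ⊔ aᶜ := by rw [qinf_top]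
    _ = ⊤ := qsup_compl a
lemma qinf_bot {n} (a : Q n) : a ⊓ ⊥ = ⊥ := by
  calc a ⊓ ⊥ = (a ⊓ ⊥) ⊔ ⊥ := (qsup_bot _).symm
    _ = (a ⊓ ⊥) ⊔ (a ⊓ aᶜ) := by rw [qinf_compl]
    _ = a ⊓ (⊥ ⊔ aᶜ) := (qinf_distrib _ _ _).symm
    _ = a ⊓ (aᶜ ⊔ ⊥) := by rw [qsup_comm]
    _ = a ⊓ aᶜ := by rw [qsup_bot]
    _ = ⊥ := qinf_compl a
lemma qsup_inf_self {n} (a b : Q n) : a ⊔ a ⊓ b = a := by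
  calc a ⊔ a ⊓ b = a ⊓ ⊤ ⊔ a ⊓ b := by rw [qinf_top]
    _ = a ⊓ (⊤ ⊔ b) := (qinf_distrib _ _ _).symm
    _ = a ⊓ (b ⊔ ⊤) := by rw [qsup_comm]
    _ = a ⊓ ⊤ := by rw [qsup_top]
    _ = a := qinf_top a
lemma qinf_sup_self {n} (a b : Q n) : a ⊓ (a ⊔ b) = a := by
  calc a ⊓ (a ⊔ b) = (a ⊔ ⊥) ⊓ (a ⊔ b) := by rw [qsup_bot]
    _ = a ⊔ ⊥ ⊓ b := (qsup_distrib _ _ _).symm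
    _ = a ⊔ b ⊓ ⊥ := by rw [qinf_comm]
    _ = a ⊔ ⊥ := by rw [qinf_bot]
    _ = a := qsup_bot a

instance (n : ℕ) : Lattice (Q n) :=
  Lattice.mk' qsup_comm qsup_assoc qinf_comm qinf_assoc qsup_inf_self qinf_sup_self

instance (n : ℕ) : DistribLattice (Q n) where
  le_sup_inf x y z := le_of_eq (qsup_distrib x y z).symm

instance (n : ℕ) : BooleanAlgebra (Q n) where
  inf_compl_le_bot x := le_of_eq (qinf_compl x)
  top_le_sup_compl x := ge_of_eq (qsup_compl x)
  le_top a := sup_eq_right.mp (qsup_top a)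
  bot_le a := sup_eq_right.mp ((qsup_comm _ _).trans (qsup_bot a))
  sdiff a b := a ⊓ bᶜ
  himp a b := b ⊔ aᶜ
  sdiff_eq _ _ := rfl
  himp_eq _ _ := rfl

end Completeness
namespace Completeness

lemma q_epsCatL {n} (y : Q n) : qcast (Nat.zero_add n) (qcat (mk .eps) y) = y :=
  Quotient.inductionOn y fun e =>
    (mk_cast (Nat.zero_add n) (.cat .eps e)).symm.trans (Quotient.sound (MEq.epsCatL e))
lemma q_epsCatR {n} (y : Q n) : qcat y (mk .eps) = y :=
  Quotient.inductionOn y fun e => Quotient.sound (MEq.epsCatR e)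
lemma q_botCatL {m k} (y : Q k) : qcat (⊥ : Q m) y = ⊥ :=
  Quotient.inductionOn y fun e => Quotient.sound (MEq.botCatL e)
lemma q_botCatR {m k} (x : Q m) : qcat x (⊥ : Q k) = ⊥ :=
  Quotient.inductionOn x fun e => Quotient.sound (MEq.botCatR e)
lemma q_complCat {m k} (x : Q m) (y : Q k) :
    (qcat x y)ᶜ = qcat xᶜ ⊤ ⊔ qcat ⊤ yᶜ :=
  Quotient.inductionOn₂ x y fun e f => Quotient.sound (MEq.complCat e f)
lemma q_catAssoc {a b c} (x : Q a) (y : Q b) (z : Q c) :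
    qcast (Nat.add_assoc a b c) (qcat (qcat x y) z) = qcat x (qcat y z) :=
  Quotient.inductionOn₃ x y z fun e f g =>
    (mk_cast (Nat.add_assoc a b c) (.cat (.cat e f) g)).symm.trans
      (Quotient.sound (MEq.catAssoc e f g))
lemma q_catPlusL {m k} (x : Q m) (y z : Q k) :
    qcat x (y ⊔ z) = qcat x y ⊔ qcat x z :=
  Quotient.inductionOn₃ x y z fun e f g => Quotient.sound (MEq.catPlusL e f g)
lemma q_catPlusR {m k} (x y : Q m) (z : Q k) :
    qcat (x ⊔ y) z = qcat x z ⊔ qcat y z :=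
  Quotient.inductionOn₃ x y z fun e f g => Quotient.sound (MEq.catPlusR e f g)
lemma q_catInterL {m k} (x : Q m) (y z : Q k) :
    qcat x (y ⊓ z) = qcat x y ⊓ qcat x z :=
  Quotient.inductionOn₃ x y z fun e f g => Quotient.sound (MEq.catInterL e f g)
lemma q_catInterR {m k} (x y : Q m) (z : Q k) :
    qcat (x ⊓ y) z = qcat x z ⊓ qcat y z :=
  Quotient.inductionOn₃ x y z fun e f g => Quotient.sound (MEq.catInterR e f g)

lemma qcat_cast_left {m m' k} (h : m = m') (x : Q m) (y : Q k) :
    qcat (qcast h x) y = qcast (by rw [h]) (qcat x y) := by subst h; rfl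
lemma qcat_cast_right {m k k'} (h : k = k') (x : Q m) (y : Q k) :
    qcat x (qcast h y) = qcast (by rw [h]) (qcat x y) := by subst h; rfl

lemma qcat_mono_right {m k} (x : Q m) {y y' : Q k} (h : y ≤ y') :
    qcat x y ≤ qcat x y' :=
  sup_eq_right.mp (by rw [← q_catPlusL, sup_eq_right.mpr h])
lemma qcat_mono_left {m k} {x x' : Q m} (h : x ≤ x') (y : Q k) :
    qcat x y ≤ qcat x' y :=
  sup_eq_right.mp (by rw [← q_catPlusR, sup_eq_right.mpr h])

def bitQ (c : Bool) : Q 1 := mk (bitAtom c)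
def atomQ (n : ℕ) (b : List Bool) : Q n := mk (ofStringN n b)

lemma cast_self {n} (h : n = n) (e : MExp n) : MExp.cast h e = e := by
  rw [Subsingleton.elim h rfl]; rfl

@[simp] lemma qcast_atomQ {m n} (h : m = n) (b : List Bool) :
    qcast h (atomQ m b) = atomQ n b := by subst h; rfl

lemma atomQ_nil : atomQ 0 [] = mk .eps := by
  simp [atomQ, ofStringN, ofString, mk_cast]

lemma atomQ_cons (c : Bool) (t : List Bool) :
    atomQ (t.length + 1) (c :: t) =
      qcast (Nat.add_comm 1 t.length) (qcat (bitQ c) (atomQ t.length t)) := by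
  have h1 : ofStringN (t.length + 1) (c :: t) = ofString (c :: t) := by
    simp [ofStringN, cast_self]
  have h2 : ofStringN t.length t = ofString t := by
    simp [ofStringN, cast_self]
  simp [atomQ, h1, h2, ofString, mk_cast, bitQ, qcat]

lemma atomQ_cons' {n} (c : Bool) (t : List Bool) (h : t.length = n) :
    atomQ (n + 1) (c :: t) =
      qcast (Nat.add_comm 1 n) (qcat (bitQ c) (atomQ n t)) := by
  subst h; exact atomQ_cons c t

lemma atomQ_single (c : Bool) : atomQ 1 [c] = bitQ c := by
  rw [show atomQ 1 [c] = qcast (Nat.add_comm 1 0) (qcat (bitQ c) (atomQ 0 []))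
      from atomQ_cons c []]
  rw [atomQ_nil, show qcat (bitQ c) (mk .eps) = bitQ c
      from Quotient.sound (MEq.epsCatR (bitAtom c))]
  rfl

lemma qcat_atom : ∀ (b b' : List Bool),
    qcat (atomQ b.length b) (atomQ b'.length b') =
      atomQ (b.length + b'.length) (b ++ b') := by
  intro b b'
  induction b with
  | nil =>
    simp only [List.length_nil, List.nil_append]
    rw [atomQ_nil, ← qcast_atomQ (Nat.zero_add b'.length).symm b']
    exact (qcast_eq_iff _ _ _).mp (q_epsCatL _)
  | cons c t ih =>
    simp only [List.length_cons, List.cons_append]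
    rw [atomQ_cons, qcat_cast_left]
    rw [← qcast_atomQ (Nat.add_right_comm t.length b'.length 1)
      (c :: (t ++ b'))]
    rw [atomQ_cons' c (t ++ b') (by simp)]
    rw [← ih, ← q_catAssoc, qcast_qcast, qcast_qcast]

lemma qcat_atom' {m k : ℕ} (b b' : List Bool) (hb : b.length = m) (hb' : b'.length = k) :
    qcat (atomQ m b) (atomQ k b') = atomQ (m + k) (b ++ b') := by
  subst hb; subst hb'; exact qcat_atom b b'

lemma bitQ_inf_ne (c c' : Bool) (h : c ≠ c') : bitQ c ⊓ bitQ c' = ⊥ := by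
  cases c <;> cases c' <;> simp_all [bitQ, bitAtom]
  · exact Quotient.sound MEq.zeroInterOne
  · exact Quotient.sound MEq.oneInterZero

lemma atom_disjoint : ∀ {n : ℕ} (b b' : List Bool), b.length = n → b'.length = n →
    b ≠ b' → atomQ n b ⊓ atomQ n b' = ⊥ := by
  intro n
  induction n with
  | zero =>
    intro b b' hb hb' hne
    rw [List.length_eq_zero_iff] at hb hb'; subst hb; subst hb'; exact absurd rfl hne
  | succ n ih =>
    intro b b' hb hb' hne
    match b, b' with
    | c :: t, c' :: t' =>
      have ht : t.length = n := by simpa using hb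
      have ht' : t'.length = n := by simpa using hb'
      rw [atomQ_cons' c t ht, atomQ_cons' c' t' ht', ← qcast_inf]
      by_cases hc : c = c'
      · subst hc
        have htt : t ≠ t' := by rintro rfl; exact hne rfl
        rw [← q_catInterL, ih t t' ht ht' htt, q_botCatR, qcast_bot]
      · have h1 : qcat (bitQ c) (atomQ n t) ⊓ qcat (bitQ c') (atomQ n t') ≤
            qcat (bitQ c) ⊤ ⊓ qcat (bitQ c') ⊤ :=
          inf_le_inf (qcat_mono_right _ le_top) (qcat_mono_right _ le_top)
        rw [← q_catInterR, bitQ_inf_ne c c' hc, q_botCatL] at h1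
        rw [le_bot_iff.mp h1, qcast_bot]

end Completeness
namespace Completeness

lemma mem_allStrings : ∀ (n : ℕ) (b : List Bool), b ∈ allStrings n ↔ b.length = n := by
  intro n
  induction n with
  | zero => intro b; simp [allStrings, List.length_eq_zero_iff]
  | succ n ih =>
    intro b
    cases b with
    | nil => simp [allStrings]
    | cons c t => cases c <;> simp [allStrings, ih]

noncomputable def strs (n : ℕ) : Finset (List Bool) := (allStrings n).toFinset

lemma mem_strs {n : ℕ} {b : List Bool} : b ∈ strs n ↔ b.length = n := by
  simp [strs, mem_allStrings]

lemma length_of_mem_msem : ∀ {n : ℕ} (e : MExp n), ∀ x ∈ msem e, x.length = n := by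
  intro n e
  induction e with
  | eps => intro x hx; simp [msem] at hx; simp [hx]
  | bot => intro x hx; simp [msem] at hx
  | b0 => intro x hx; simp [msem] at hx; simp [hx]
  | b1 => intro x hx; simp [msem] at hx; simp [hx]
  | wx => intro x hx; rcases hx with h | h <;> simp_all
  | cat e f ihe ihf =>
    rintro x ⟨y, hy, z, hz, rfl⟩
    simp [ihe y hy, ihf z hz]
  | plus e f ihe ihf => rintro x (hx | hx); exacts [ihe x hx, ihf x hx]
  | inter e f ihe ihf => rintro x ⟨hx, _⟩; exact ihe x hx
  | compl e ih => rintro x ⟨hx, _⟩; exact hx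

open Classical in
noncomputable def F (n : ℕ) (s : Set (List Bool)) : Q n :=
  ((strs n).filter (· ∈ s)).sup (atomQ n)

open Classical in
lemma mk_normalForm {n : ℕ} (e : MExp n) : mk (normalForm e) = F n (msem e) := by
  have h1 : ∀ (l : List (List Bool)),
      mk (l.foldr (fun b acc => .plus (ofStringN n b) acc) .bot)
        = l.toFinset.sup (atomQ n) := by
    intro l
    induction l with
    | nil => simp
    | cons a l ih =>
      rw [List.foldr_cons, mk_plus, ih, List.toFinset_cons, Finset.sup_insert]
      rfl
  rw [normalForm, h1, List.toFinset_filter, F, strs]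
  refine congrArg (fun t => Finset.sup t (atomQ n)) ?_
  ext x
  simp [Finset.mem_filter]

end Completeness
namespace Completeness

lemma qcat_sup_left {m k : ℕ} {α : Type*} [DecidableEq α] (s : Finset α)
    (f : α → Q m) (y : Q k) :
    qcat (s.sup f) y = s.sup (fun a => qcat (f a) y) := by
  induction s using Finset.induction with
  | empty => simpa using q_botCatL y
  | insert _ _ h ih => rw [Finset.sup_insert, q_catPlusR, ih, Finset.sup_insert]

lemma qcat_sup_right {m k : ℕ} {α : Type*} [DecidableEq α] (x : Q m) (s : Finset α)
    (f : α → Q k) :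
    qcat x (s.sup f) = s.sup (fun a => qcat x (f a)) := by
  induction s using Finset.induction with
  | empty => simpa using q_botCatR x
  | insert _ _ h ih => rw [Finset.sup_insert, q_catPlusL, ih, Finset.sup_insert]

open Classical

lemma F_union {n : ℕ} (s t : Set (List Bool)) : F n (s ∪ t) = F n s ⊔ F n t := by
  rw [F, F, F, ← Finset.sup_union]
  refine congrArg (fun u => Finset.sup u (atomQ n)) ?_
  ext x
  simp only [Finset.mem_filter, Finset.mem_union, Set.mem_union]
  tauto

lemma F_inf {n : ℕ} (s t : Set (List Bool)) : F n s ⊓ F n t = F n (s ∩ t) := by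
  rw [F, F, F, Finset.sup_inf_distrib_right]
  apply le_antisymm
  · apply Finset.sup_le
    intro b hb
    rw [Finset.sup_inf_distrib_left]
    apply Finset.sup_le
    intro b' hb'
    rw [Finset.mem_filter] at hb hb'
    by_cases hbe : b = b'
    · subst hbe
      rw [inf_idem]
      exact Finset.le_sup (Finset.mem_filter.mpr ⟨hb.1, Set.mem_inter hb.2 hb'.2⟩)
    · rw [atom_disjoint b b' (mem_strs.mp hb.1) (mem_strs.mp hb'.1) hbe]
      exact bot_le
  · apply Finset.sup_le
    intro b hb
    rw [Finset.mem_filter] at hb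
    refine le_trans (le_inf le_rfl ?_) (Finset.le_sup (f := fun b =>
      atomQ n b ⊓ ((strs n).filter (· ∈ t)).sup (atomQ n))
      (Finset.mem_filter.mpr ⟨hb.1, hb.2.1⟩))
    exact Finset.le_sup (Finset.mem_filter.mpr ⟨hb.1, hb.2.2⟩)

lemma strs_append (m k : ℕ) :
    strs (m + k) = ((strs m) ×ˢ (strs k)).image (fun p => p.1 ++ p.2) := by
  ext x
  simp only [mem_strs, Finset.mem_image, Finset.mem_product]
  constructor
  · intro hx
    refine ⟨(x.take m, x.drop m), ⟨?_, ?_⟩, by simp⟩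
    · rw [List.length_take, hx]; exact Nat.min_eq_left (Nat.le_add_right m k)
    · rw [List.length_drop, hx]; exact Nat.add_sub_cancel_left m k
  · rintro ⟨⟨y, z⟩, ⟨hy, hz⟩, rfl⟩
    simp [hy, hz]

lemma strs_one : strs 1 = {[false], [true]} := by
  ext x
  simp [strs, allStrings]

lemma strs_zero : strs 0 = {[]} := by
  ext x
  simp [strs, allStrings]

lemma top_atoms : ∀ (n : ℕ), (⊤ : Q n) = (strs n).sup (atomQ n) := by
  intro n
  induction n with
  | zero => rw [strs_zero, Finset.sup_singleton, atomQ_nil]; rfl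
  | succ n ih =>
    have h1 : (⊤ : Q (n + 1)) = qcat (⊤ : Q n) (mk .wx) := rfl
    have hwx : (mk .wx : Q 1) = bitQ false ⊔ bitQ true :=
      (Quotient.sound MEq.zeroPlusOne).symm
    rw [h1, hwx, ih, qcat_sup_left, strs_append n 1, Finset.sup_image,
      Finset.sup_product_left]
    apply Finset.sup_congr rfl
    intro b hb
    rw [strs_one, Finset.sup_insert, Finset.sup_singleton, q_catPlusL,
      ← atomQ_single false, ← atomQ_single true]
    simp only [Function.comp_apply]
    rw [qcat_atom' (k := 1) b [false] (mem_strs.mp hb) rfl,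
      qcat_atom' (k := 1) b [true] (mem_strs.mp hb) rfl]

lemma F_compl {n : ℕ} (s : Set (List Bool)) :
    (F n s)ᶜ = F n ({x : List Bool | x.length = n} \ s) := by
  apply compl_unique
  · rw [F_inf, F]
    convert Finset.sup_empty (f := atomQ n) using 2
    ext x
    simp only [Finset.mem_filter, Set.mem_inter_iff, Set.mem_diff, Finset.notMem_empty,
      iff_false, not_and]
    tauto
  · rw [← F_union, F, top_atoms n]
    refine congrArg (fun u => Finset.sup u (atomQ n)) ?_
    ext x
    simp only [Finset.mem_filter, Set.mem_union, Set.mem_diff, Set.mem_setOf_eq, mem_strs]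
    constructor
    · exact fun h => h.1
    · intro h
      refine ⟨h, ?_⟩
      by_cases hx : x ∈ s <;> tauto

lemma F_cat {m k : ℕ} (e : MExp m) (f : MExp k)
    (he : mk e = F m (msem e)) (hf : mk f = F k (msem f)) :
    mk (.cat e f) = F (m + k) (msem (.cat e f)) := by
  rw [mk_cat, he, hf, F, F, qcat_sup_left]
  have hcong : ∀ b ∈ (strs m).filter (· ∈ msem e),
      qcat (atomQ m b) (((strs k).filter (· ∈ msem f)).sup (atomQ k)) =
        ((strs k).filter (· ∈ msem f)).sup (fun b' => atomQ (m + k) (b ++ b')) := by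
    intro b hb
    rw [qcat_sup_right]
    apply Finset.sup_congr rfl
    intro b' hb'
    exact qcat_atom' b b' (mem_strs.mp (Finset.mem_filter.mp hb).1)
      (mem_strs.mp (Finset.mem_filter.mp hb').1)
  rw [Finset.sup_congr rfl hcong, F]
  have himg : (strs (m + k)).filter (· ∈ msem (.cat e f)) =
      (((strs m).filter (· ∈ msem e)) ×ˢ ((strs k).filter (· ∈ msem f))).image
        (fun p => p.1 ++ p.2) := by
    ext x
    simp only [Finset.mem_filter, Finset.mem_image, Finset.mem_product, mem_strs]
    constructor
    · rintro ⟨hlen, hx⟩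
      rcases hx with ⟨y, hy, z, hz, rfl⟩
      exact ⟨(y, z), ⟨⟨length_of_mem_msem e y hy, hy⟩,
        ⟨length_of_mem_msem f z hz, hz⟩⟩, rfl⟩
    · rintro ⟨⟨y, z⟩, ⟨⟨hylen, hy⟩, ⟨hzlen, hz⟩⟩, rfl⟩
      simp only at hylen hzlen hy hz
      exact ⟨by simp [hylen, hzlen], ⟨y, hy, z, hz, rfl⟩⟩
  rw [himg, Finset.sup_image, Finset.sup_product_left]
  rfl

end Completeness
namespace Completeness

open Classical

lemma F_eps : mk .eps = F 0 (msem .eps) := by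
  rw [F]
  have h : (strs 0).filter (· ∈ msem .eps) = {[]} := by
    ext x
    simp [mem_strs, msem, List.length_eq_zero_iff]
  rw [h, Finset.sup_singleton, atomQ_nil]

lemma F_bot {n : ℕ} : mk (.bot : MExp n) = F n (msem (.bot : MExp n)) := by
  rw [F]
  have h : (strs n).filter (· ∈ msem (.bot : MExp n)) = ∅ := by
    ext x
    simp [msem]
  rw [h, Finset.sup_empty]
  rfl

lemma F_b0 : mk .b0 = F 1 (msem .b0) := by
  rw [F]
  have h : (strs 1).filter (· ∈ msem .b0) = {[false]} := by
    ext x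
    simp only [Finset.mem_filter, mem_strs, msem, Set.mem_singleton_iff,
      Finset.mem_singleton]
    constructor
    · exact fun h => h.2
    · rintro rfl; exact ⟨rfl, rfl⟩
  rw [h, Finset.sup_singleton, atomQ_single]
  rfl

lemma F_b1 : mk .b1 = F 1 (msem .b1) := by
  rw [F]
  have h : (strs 1).filter (· ∈ msem .b1) = {[true]} := by
    ext x
    simp only [Finset.mem_filter, mem_strs, msem, Set.mem_singleton_iff,
      Finset.mem_singleton]
    constructor
    · exact fun h => h.2
    · rintro rfl; exact ⟨rfl, rfl⟩
  rw [h, Finset.sup_singleton, atomQ_single]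
  rfl

lemma F_wx : mk .wx = F 1 (msem .wx) := by
  rw [F]
  have h : (strs 1).filter (· ∈ msem .wx) = {[false], [true]} := by
    ext x
    simp only [Finset.mem_filter, mem_strs, msem, Set.mem_insert_iff,
      Set.mem_singleton_iff, Finset.mem_insert, Finset.mem_singleton]
    constructor
    · exact fun h => h.2
    · rintro (rfl | rfl) <;> exact ⟨rfl, by tauto⟩
  rw [h, Finset.sup_insert, Finset.sup_singleton, atomQ_single, atomQ_single]
  exact (Quotient.sound MEq.zeroPlusOne).symm

theorem mk_eq_F : ∀ {n : ℕ} (e : MExp n), mk e = F n (msem e) := by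
  intro n e
  induction e with
  | eps => exact F_eps
  | bot => exact F_bot
  | b0 => exact F_b0
  | b1 => exact F_b1
  | wx => exact F_wx
  | cat e f ihe ihf => exact F_cat e f ihe ihf
  | plus e f ihe ihf => rw [mk_plus, ihe, ihf, ← F_union]; rfl
  | inter e f ihe ihf => rw [mk_inter, ihe, ihf, F_inf]; rfl
  | compl e ih => rw [mk_compl, ih, F_compl]; rfl

end Completeness

/-- Every match expression is provably equal to the sum of the literal
concatenative expressions of the strings it matches; consequently semantic
equality implies provable equality (completeness). -/
theorem matchExp_complete :
    (∀ {n : ℕ} (e : MExp n), MEq e (normalForm e)) ∧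
    (∀ {n : ℕ} (e e' : MExp n), msem e = msem e' → MEq e e') := by
  have main : ∀ {n : ℕ} (e : MExp n), MEq e (normalForm e) := by
    intro n e
    exact Completeness.mk_eq.mp
      ((Completeness.mk_eq_F e).trans (Completeness.mk_normalForm e).symm)
  refine ⟨main, ?_⟩
  intro n e e' h
  refine (main e).trans (MEq.trans ?_ (main e').symm)
  exact Completeness.mk_eq.mp (by
    rw [Completeness.mk_normalForm, Completeness.mk_normalForm, h])
end
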